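/- Let X, Y be Polish spaces, c continuous and bounded, μ ∈ P(X), ν ∈ P(Y). Suppose π ∈ Π(μ,ν) satisfies c(x,y) = inf_{x' ∈ supp(μ)} c(x',y) for all (x,y) ∈ supp(π). Then the function f ≡ 0 on supp(μ) has double conjugate f^{cc} (taken with respect to supp(μ) and supp(ν)) which is a trivial Kantorovich potential: f^{cc} ∈ S_c(μ,ν) and f^{cc} = 0 μ-almost surely. -/

import Mathlib

open MeasureTheory
open scoped ENNReal

/-- Topological support of a measure: points all of whose open neighborhoods
have positive measure. -/
def msupport {X : Type*} [TopologicalSpace X] [MeasurableSpace X]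
    (μ : Measure X) : Set X :=
  {x | ∀ U : Set X, IsOpen U → x ∈ U → μ U ≠ 0}

/-- `π` is a coupling of `μ` and `ν`. -/
def IsCoupling {X Y : Type*} [MeasurableSpace X] [MeasurableSpace Y]
    (π : Measure (X × Y)) (μ : Measure X) (ν : Measure Y) : Prop :=
  IsProbabilityMeasure π ∧ π.map Prod.fst = μ ∧ π.map Prod.snd = ν

/-- Optimal transport cost (in `ℝ≥0∞`). -/
noncomputable def OTCost {X Y : Type*} [MeasurableSpace X] [MeasurableSpace Y]
    (c : X → Y → ℝ) (μ : Measure X) (ν : Measure Y) : ℝ≥0∞ :=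
  ⨅ (π : Measure (X × Y)) (_ : IsCoupling π μ ν),
    ∫⁻ p, ENNReal.ofReal (c p.1 p.2) ∂π

/-- Optimal transport cost (real-valued, for bounded costs). -/
noncomputable def OTr {X Y : Type*} [MeasurableSpace X] [MeasurableSpace Y]
    (c : X → Y → ℝ) (μ : Measure X) (ν : Measure Y) : ℝ :=
  sInf {r : ℝ | ∃ π : Measure (X × Y), IsCoupling π μ ν ∧ r = ∫ p, c p.1 p.2 ∂π}

lemma isClosed_msupport {X : Type*} [TopologicalSpace X] [MeasurableSpace X]
    (μ : Measure X) : IsClosed (msupport μ) := by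
  rw [← isOpen_compl_iff, isOpen_iff_forall_mem_open]
  intro x hx
  simp only [msupport, Set.mem_compl_iff, Set.mem_setOf_eq] at hx
  push_neg at hx
  obtain ⟨U, hU, hxU, hμU⟩ := hx
  refine ⟨U, fun z hz => ?_, hU, hxU⟩
  simp only [msupport, Set.mem_compl_iff, Set.mem_setOf_eq]
  push_neg
  exact ⟨U, hU, hz, hμU⟩

lemma msupport_compl_null {X : Type*} [TopologicalSpace X]
    [SecondCountableTopology X] [MeasurableSpace X]
    (μ : Measure X) : μ (msupport μ)ᶜ = 0 := by
  obtain ⟨B, hBc, -, hB⟩ := TopologicalSpace.exists_countable_basis X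
  have h1 : (msupport μ)ᶜ ⊆ ⋃₀ {b ∈ B | μ b = 0} := by
    intro x hx
    simp only [msupport, Set.mem_compl_iff, Set.mem_setOf_eq] at hx
    push_neg at hx
    obtain ⟨U, hU, hxU, hμU⟩ := hx
    obtain ⟨b, hbB, hxb, hbU⟩ := hB.exists_subset_of_mem_open hxU hU
    exact ⟨b, ⟨hbB, measure_mono_null hbU hμU⟩, hxb⟩
  refine measure_mono_null h1 ?_
  rw [measure_sUnion_null_iff (hBc.mono (Set.sep_subset _ _))]
  exact fun s hs => hs.2

lemma usc_inf_image {α β : Type*} [TopologicalSpace α] (F : α → β → ℝ)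
    (hF : ∀ y, Continuous fun x => F x y) (s : Set β) (B : ℝ)
    (hB : ∀ x, ∀ y ∈ s, B ≤ F x y) :
    UpperSemicontinuous fun x => sInf ((fun y => F x y) '' s) := by
  intro x t ht
  rcases s.eq_empty_or_nonempty with rfl | hs
  · simp only [Set.image_empty] at ht ⊢
    exact Filter.Eventually.of_forall fun _ => ht
  · obtain ⟨v, hv, hvt⟩ := exists_lt_of_csInf_lt (hs.image _) ht
    obtain ⟨y₀, hy₀, rfl⟩ := hv
    have hopen : IsOpen {x' | F x' y₀ < t} := isOpen_lt (hF y₀) continuous_const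
    filter_upwards [hopen.mem_nhds hvt] with x' hx'
    have hbdd : BddBelow ((fun y => F x' y) '' s) := by
      refine ⟨B, ?_⟩
      rintro r ⟨y, hy, rfl⟩
      exact hB x' y hy
    exact lt_of_le_of_lt (csInf_le hbdd ⟨y₀, hy₀, rfl⟩) hx'

theorem stmt15 {X Y : Type*} [Nonempty X] [Nonempty Y]
    [TopologicalSpace X] [PolishSpace X] [MeasurableSpace X] [BorelSpace X]
    [TopologicalSpace Y] [PolishSpace Y] [MeasurableSpace Y] [BorelSpace Y]
    (c : X → Y → ℝ) (hc : Continuous fun p : X × Y => c p.1 p.2)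
    (hc0 : ∀ x y, 0 ≤ c x y) (C : ℝ) (hcC : ∀ x y, c x y ≤ C)
    (μ : Measure X) (ν : Measure Y)
    [IsProbabilityMeasure μ] [IsProbabilityMeasure ν]
    (π : Measure (X × Y)) (hπ : IsCoupling π μ ν)
    (hproj : ∀ p ∈ msupport π, c p.1 p.2 = sInf ((fun x' => c x' p.2) '' msupport μ))
    (fc : Y → ℝ) (hfc : ∀ y, fc y = sInf ((fun x => c x y) '' msupport μ))
    (fcc : X → ℝ) (hfcc : ∀ x, fcc x = sInf ((fun y => c x y - fc y) '' msupport ν)) :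
    (∫ x, fcc x ∂μ +
        ∫ y, sInf ((fun x => c x y - fcc x) '' msupport μ) ∂ν = OTr c μ ν) ∧
      fcc =ᵐ[μ] fun _ => (0 : ℝ) := by
  haveI : IsProbabilityMeasure π := hπ.1
  -- nonemptiness of supports
  have hμc : μ (msupport μ)ᶜ = 0 := msupport_compl_null μ
  have hνc : ν (msupport ν)ᶜ = 0 := msupport_compl_null ν
  have hπc : π (msupport π)ᶜ = 0 := msupport_compl_null π
  have hμne : (msupport μ).Nonempty := by
    rcases Set.eq_empty_or_nonempty (msupport μ) with he | hne
    · exfalso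
      rw [he, Set.compl_empty] at hμc
      simp [measure_univ] at hμc
    · exact hne
  have hνne : (msupport ν).Nonempty := by
    rcases Set.eq_empty_or_nonempty (msupport ν) with he | hne
    · exfalso
      rw [he, Set.compl_empty] at hνc
      simp [measure_univ] at hνc
    · exact hne
  -- basic bounds on fc
  have hfc_bdd : ∀ y : Y, BddBelow ((fun x => c x y) '' msupport μ) := by
    intro y
    refine ⟨0, ?_⟩
    rintro r ⟨x, _, rfl⟩
    exact hc0 x y
  have hfc_le : ∀ y : Y, ∀ x ∈ msupport μ, fc y ≤ c x y := by
    intro y x hx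
    rw [hfc]
    exact csInf_le (hfc_bdd y) ⟨x, hx, rfl⟩
  have hfc_nonneg : ∀ y, 0 ≤ fc y := by
    intro y
    rw [hfc]
    refine le_csInf (hμne.image _) ?_
    rintro r ⟨x, _, rfl⟩
    exact hc0 x y
  have hfc_leC : ∀ y, fc y ≤ C := by
    intro y
    obtain ⟨x₀, hx₀⟩ := hμne
    exact (hfc_le y x₀ hx₀).trans (hcC x₀ y)
  -- basic bounds on fcc
  have hfcc_bdd : ∀ x : X, BddBelow ((fun y => c x y - fc y) '' msupport ν) := by
    intro x
    refine ⟨-C, ?_⟩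
    rintro r ⟨y, _, rfl⟩
    have := hfc_leC y
    have := hc0 x y
    dsimp only
    linarith
  have hfcc_le : ∀ x : X, ∀ y ∈ msupport ν, fcc x ≤ c x y - fc y := by
    intro x y hy
    rw [hfcc]
    exact csInf_le (hfcc_bdd x) ⟨y, hy, rfl⟩
  have hfcc_nonneg : ∀ x ∈ msupport μ, 0 ≤ fcc x := by
    intro x hx
    rw [hfcc]
    refine le_csInf (hνne.image _) ?_
    rintro r ⟨y, _, rfl⟩
    have := hfc_le y x hx
    dsimp only
    linarith
  have hfcc_leC : ∀ x, fcc x ≤ C := by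
    intro x
    obtain ⟨y₀, hy₀⟩ := hνne
    have h1 := hfcc_le x y₀ hy₀
    have h2 := hfc_nonneg y₀
    have h3 := hcC x y₀
    linarith
  -- membership of marginal supports
  have hmem_fst : ∀ p ∈ msupport π, p.1 ∈ msupport μ := by
    intro p hp U hU hxU
    have h1 : π (Prod.fst ⁻¹' U) ≠ 0 := hp _ (hU.preimage continuous_fst) hxU
    rw [← hπ.2.1, Measure.map_apply measurable_fst hU.measurableSet]
    exact h1
  have hmem_snd : ∀ p ∈ msupport π, p.2 ∈ msupport ν := by
    intro p hp U hU hxU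
    have h1 : π (Prod.snd ⁻¹' U) ≠ 0 := hp _ (hU.preimage continuous_snd) hxU
    rw [← hπ.2.2, Measure.map_apply measurable_snd hU.measurableSet]
    exact h1
  -- on supp π, fcc vanishes at the first coordinate
  have hzero : ∀ p ∈ msupport π, fcc p.1 = 0 := by
    intro p hp
    have h1 : fcc p.1 ≤ c p.1 p.2 - fc p.2 := hfcc_le p.1 p.2 (hmem_snd p hp)
    have h2 : c p.1 p.2 = fc p.2 := by rw [hfc, hproj p hp]
    have h3 : 0 ≤ fcc p.1 := hfcc_nonneg p.1 (hmem_fst p hp)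
    linarith
  -- measurability of fc and fcc
  have hfc_meas : Measurable fc := by
    have husc : UpperSemicontinuous fun y => sInf ((fun x => c x y) '' msupport μ) := by
      refine usc_inf_image (fun y x => c x y) (fun x => ?_) (msupport μ) 0 ?_
      · exact hc.comp (continuous_const.prodMk continuous_id)
      · intro y x _
        exact hc0 x y
    have : fc = fun y => sInf ((fun x => c x y) '' msupport μ) := funext hfc
    rw [this]
    exact husc.measurable
  have hfcc_meas : Measurable fcc := by
    have husc : UpperSemicontinuous fun x => sInf ((fun y => c x y - fc y) '' msupport ν) := by
      refine usc_inf_image (fun x y => c x y - fc y) (fun y => ?_) (msupport ν) (-C) ?_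
      · exact (hc.comp (continuous_id.prodMk continuous_const)).sub continuous_const
      · intro x y _
        have := hfc_leC y
        have := hc0 x y
        linarith
    have : fcc = fun x => sInf ((fun y => c x y - fc y) '' msupport ν) := funext hfcc
    rw [this]
    exact husc.measurable
  -- a.e. vanishing of fcc
  have hae : fcc =ᵐ[μ] fun _ => (0 : ℝ) := by
    have hS : MeasurableSet {x | ¬ fcc x = 0} := (hfcc_meas (measurableSet_singleton 0)).compl
    rw [Filter.EventuallyEq, ae_iff]
    rw [← hπ.2.1, Measure.map_apply measurable_fst hS]
    refine measure_mono_null ?_ hπc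
    intro p hp hps
    exact hp (hzero p hps)
  -- a.e. membership statements
  have hπae : ∀ᵐ p ∂π, p ∈ msupport π := by
    rw [ae_iff]
    exact measure_mono_null (fun p hp => hp) hπc
  have hνae : ∀ᵐ y ∂ν, y ∈ msupport ν := by
    rw [ae_iff]
    exact measure_mono_null (fun y hy => hy) hνc
  -- the conjugate of fcc agrees with fc on the support of ν
  have hg_eq : ∀ y ∈ msupport ν,
      sInf ((fun x => c x y - fcc x) '' msupport μ) = fc y := by
    intro y hy
    have hbdd : BddBelow ((fun x => c x y - fcc x) '' msupport μ) := by
      refine ⟨-C, ?_⟩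
      rintro r ⟨x, _, rfl⟩
      have := hfcc_leC x
      have := hc0 x y
      dsimp only
      linarith
    apply le_antisymm
    · rw [hfc]
      refine le_csInf (hμne.image _) ?_
      rintro r ⟨x, hx, rfl⟩
      have h1 : sInf ((fun x => c x y - fcc x) '' msupport μ) ≤ c x y - fcc x :=
        csInf_le hbdd ⟨x, hx, rfl⟩
      have h2 := hfcc_nonneg x hx
      linarith
    · refine le_csInf (hμne.image _) ?_
      rintro r ⟨x, hx, rfl⟩
      have h1 : fcc x ≤ c x y - fc y := hfcc_le x y hy
      dsimp only
      linarith
  have hgfc : (fun y => sInf ((fun x => c x y - fcc x) '' msupport μ)) =ᵐ[ν] fc :=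
    hνae.mono fun y hy => hg_eq y hy
  -- integrability facts
  have hint_c : ∀ (π' : Measure (X × Y)) [IsProbabilityMeasure π'],
      Integrable (fun p : X × Y => c p.1 p.2) π' := by
    intro π' _
    refine Integrable.mono' (integrable_const C) hc.aestronglyMeasurable ?_
    refine Filter.Eventually.of_forall fun p => ?_
    rw [Real.norm_eq_abs, abs_of_nonneg (hc0 _ _)]
    exact hcC _ _
  have hint_fc : ∀ (π' : Measure (X × Y)) [IsProbabilityMeasure π'],
      Integrable (fun p : X × Y => fc p.2) π' := by
    intro π' _
    refine Integrable.mono' (integrable_const C)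
      (hfc_meas.comp measurable_snd).aestronglyMeasurable ?_
    refine Filter.Eventually.of_forall fun p => ?_
    rw [Real.norm_eq_abs, abs_of_nonneg (hfc_nonneg _)]
    exact hfc_leC _
  -- for any coupling π', ∫ fc p.2 ∂π' = ∫ fc ∂ν
  have hint_eq : ∀ (π' : Measure (X × Y)), IsCoupling π' μ ν →
      ∫ p, fc p.2 ∂π' = ∫ y, fc y ∂ν := by
    intro π' hπ'
    rw [← hπ'.2.2, integral_map measurable_snd.aemeasurable hfc_meas.aestronglyMeasurable]
  -- on supp π, c = fc ∘ snd, so ∫ c ∂π = ∫ fc ∂ν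
  have hππ : ∫ p, c p.1 p.2 ∂π = ∫ y, fc y ∂ν := by
    rw [← hint_eq π hπ]
    refine integral_congr_ae (hπae.mono fun p hp => ?_)
    dsimp only
    rw [hfc, ← hproj p hp]
  -- π is optimal
  have hlow : ∀ (π' : Measure (X × Y)), IsCoupling π' μ ν →
      ∫ p, c p.1 p.2 ∂π ≤ ∫ p, c p.1 p.2 ∂π' := by
    intro π' hπ'
    haveI : IsProbabilityMeasure π' := hπ'.1
    have hμae' : ∀ᵐ p ∂π', p.1 ∈ msupport μ := by
      rw [ae_iff]
      have hset : {p : X × Y | ¬ p.1 ∈ msupport μ} = Prod.fst ⁻¹' (msupport μ)ᶜ := rfl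
      rw [hset, ← Measure.map_apply measurable_fst
        (isClosed_msupport μ).measurableSet.compl, hπ'.2.1]
      exact hμc
    calc ∫ p, c p.1 p.2 ∂π = ∫ y, fc y ∂ν := hππ
      _ = ∫ p, fc p.2 ∂π' := (hint_eq π' hπ').symm
      _ ≤ ∫ p, c p.1 p.2 ∂π' := by
          refine integral_mono_ae (hint_fc π') (hint_c π')
            (hμae'.mono fun p hp => ?_)
          exact hfc_le p.2 p.1 hp
  have hOTr : OTr c μ ν = ∫ p, c p.1 p.2 ∂π := by
    apply le_antisymm
    · refine csInf_le ?_ ⟨π, hπ, rfl⟩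
      refine ⟨0, ?_⟩
      rintro r ⟨π', hπ', rfl⟩
      haveI : IsProbabilityMeasure π' := hπ'.1
      exact integral_nonneg fun p => hc0 _ _
    · refine le_csInf ⟨_, π, hπ, rfl⟩ ?_
      rintro r ⟨π', hπ', rfl⟩
      exact hlow π' hπ'
  refine ⟨?_, hae⟩
  rw [integral_congr_ae hae, integral_zero, zero_add, integral_congr_ae hgfc, hOTr, hππ]
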